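/- If G is a triangle-free graph with m edges, then ρ(G) ≤ √m. -/

import Mathlib

open SimpleGraph

/-- The spectral radius (largest adjacency eigenvalue) of a finite graph. -/
noncomputable def graphSpecRad {V : Type*} [Fintype V] (G : SimpleGraph V) : ℝ :=
  letI := Classical.decRel G.Adj
  sSup {t : ℝ | ∃ x : V → ℝ, x ≠ 0 ∧ (G.adjMatrix ℝ).mulVec x = t • x}

lemma sum_deg_le_card_edges {V : Type*} [Fintype V] [DecidableEq V] (G : SimpleGraph V)
    [DecidableRel G.Adj] (hfree : G.CliqueFree 3) (i : V) :
    ∑ j ∈ G.neighborFinset i, G.degree j ≤ G.edgeFinset.card := by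
  classical
  have hcard : ∑ j ∈ G.neighborFinset i, G.degree j
      = ((G.neighborFinset i).sigma (fun j => G.neighborFinset j)).card := by
    rw [Finset.card_sigma]
    rfl
  rw [hcard]
  apply Finset.card_le_card_of_injOn (fun p => s(p.1, p.2))
  · intro p hp
    rw [Finset.mem_coe, Finset.mem_sigma] at hp
    simp only [Finset.mem_coe, SimpleGraph.mem_edgeFinset, SimpleGraph.mem_edgeSet]
    exact (SimpleGraph.mem_neighborFinset _ _ _).1 hp.2
  · intro p hp q hq h
    simp only [Finset.mem_coe, Finset.mem_sigma, SimpleGraph.mem_neighborFinset] at hp hq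
    simp only [Sym2.eq_iff] at h
    rcases h with ⟨h1, h2⟩ | ⟨h1, h2⟩
    · exact Sigma.ext h1 (heq_of_eq h2)
    · exfalso
      apply hfree {i, p.1, p.2}
      rw [SimpleGraph.is3Clique_triple_iff]
      refine ⟨hp.1, ?_, hp.2⟩
      rw [← h2] at hq
      exact hq.1

/-- (Nosal) If `G` is a triangle-free graph with `m` edges, then `ρ(G) ≤ √m`. -/
theorem stmt6 {V : Type*} [Fintype V] (G : SimpleGraph V) (hfree : G.CliqueFree 3) :
    graphSpecRad G ≤ Real.sqrt (G.edgeSet.ncard) := by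
  classical
  apply Real.sSup_le _ (Real.sqrt_nonneg _)
  rintro t ⟨x, hx, hEig⟩
  have hE : ∀ w, ∑ u ∈ G.neighborFinset w, x u = t * x w := by
    intro w
    have := congrFun hEig w
    rwa [SimpleGraph.adjMatrix_mulVec_apply] at this
  obtain ⟨v, hv⟩ : ∃ v, x v ≠ 0 := by
    by_contra h
    push_neg at h
    exact hx (funext h)
  obtain ⟨i, -, hi⟩ := Finset.exists_max_image Finset.univ (fun v => |x v|)
    ⟨v, Finset.mem_univ v⟩
  have hxi : 0 < |x i| := by
    have := hi v (Finset.mem_univ v)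
    have hv' : 0 < |x v| := abs_pos.2 hv
    exact lt_of_lt_of_le hv' this
  have h1 : t ^ 2 * x i = ∑ j ∈ G.neighborFinset i, ∑ k ∈ G.neighborFinset j, x k := by
    calc t ^ 2 * x i = t * (t * x i) := by ring
      _ = t * ∑ j ∈ G.neighborFinset i, x j := by rw [hE i]
      _ = ∑ j ∈ G.neighborFinset i, t * x j := Finset.mul_sum _ _ _
      _ = ∑ j ∈ G.neighborFinset i, ∑ k ∈ G.neighborFinset j, x k :=
          Finset.sum_congr rfl fun j _ => (hE j).symm
  have h2 : t ^ 2 * |x i| ≤ (G.edgeFinset.card : ℝ) * |x i| := by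
    calc t ^ 2 * |x i| = |t ^ 2 * x i| := by
          rw [abs_mul, abs_of_nonneg (sq_nonneg t)]
      _ = |∑ j ∈ G.neighborFinset i, ∑ k ∈ G.neighborFinset j, x k| := by rw [h1]
      _ ≤ ∑ j ∈ G.neighborFinset i, |∑ k ∈ G.neighborFinset j, x k| :=
          Finset.abs_sum_le_sum_abs _ _
      _ ≤ ∑ j ∈ G.neighborFinset i, ∑ k ∈ G.neighborFinset j, |x k| :=
          Finset.sum_le_sum fun j _ => Finset.abs_sum_le_sum_abs _ _
      _ ≤ ∑ j ∈ G.neighborFinset i, ∑ k ∈ G.neighborFinset j, |x i| :=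
          Finset.sum_le_sum fun j _ => Finset.sum_le_sum fun k _ => hi k (Finset.mem_univ k)
      _ = (∑ j ∈ G.neighborFinset i, (G.degree j : ℝ)) * |x i| := by
          rw [Finset.sum_mul]
          refine Finset.sum_congr rfl fun j _ => ?_
          rw [Finset.sum_const, nsmul_eq_mul, G.card_neighborFinset_eq_degree j]
      _ ≤ (G.edgeFinset.card : ℝ) * |x i| := by
          apply mul_le_mul_of_nonneg_right _ (abs_nonneg _)
          rw [← Nat.cast_sum]
          exact_mod_cast sum_deg_le_card_edges G hfree i
  have ht2 : t ^ 2 ≤ (G.edgeFinset.card : ℝ) := le_of_mul_le_mul_right h2 hxi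
  apply Real.le_sqrt_of_sq_le
  rwa [Set.ncard_eq_toFinset_card' G.edgeSet]
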